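/- Let N be a group and let K_0, K_1, …, K_n be normal subgroups of N such that each quotient N/K_i is a non-abelian finite simple group. Set K = K_0 ∩ K_1 ∩ ⋯ ∩ K_n. Then N/K is isomorphic to a direct product of non-abelian finite simple groups; more precisely, there is a subset I of {0, 1, …, n} such that N/K is isomorphic to the direct product of the groups N/K_i for i ∈ I. -/

import Mathlib

open QuotientGroup Subgroup

section aux
variable {N : Type*} [Group N]

/-- CRT for two normal subgroups with join ⊤. -/
noncomputable def quotInfEquivProd (H L : Subgroup N) [H.Normal] [L.Normal]
    (h : H ⊔ L = ⊤) : N ⧸ (H ⊓ L) ≃* (N ⧸ H) × (N ⧸ L) := by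
  let φ : N →* (N ⧸ H) × (N ⧸ L) := (QuotientGroup.mk' H).prod (QuotientGroup.mk' L)
  have hker : MonoidHom.ker φ = H ⊓ L := by
    rw [MonoidHom.ker_prod, QuotientGroup.ker_mk', QuotientGroup.ker_mk']
  have hsurj : Function.Surjective φ := by
    rintro ⟨x, y⟩
    obtain ⟨x, rfl⟩ := QuotientGroup.mk_surjective x
    obtain ⟨y, rfl⟩ := QuotientGroup.mk_surjective y
    have hxy : x⁻¹ * y ∈ (H ⊔ L : Subgroup N) := by rw [h]; trivial
    rw [← SetLike.mem_coe, Subgroup.mul_normal] at hxy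
    obtain ⟨u, hu, v, hv, huv⟩ := hxy
    refine ⟨x * u, ?_⟩
    have h1 : (QuotientGroup.mk (x * u) : N ⧸ H) = QuotientGroup.mk x := by
      rw [QuotientGroup.eq]
      simpa using H.inv_mem hu
    have h2 : (QuotientGroup.mk (x * u) : N ⧸ L) = QuotientGroup.mk y := by
      rw [QuotientGroup.eq]
      have hv' : (x * u)⁻¹ * y = v := by
        simp only [] at huv
        have hy : y = x * (u * v) := by rw [huv]; group
        rw [hy]; group
      rw [hv']; exact hv
    exact Prod.ext h1 h2
  exact (QuotientGroup.quotientMulEquivOfEq hker.symm).trans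
    (QuotientGroup.quotientKerEquivOfSurjective φ hsurj)

end aux

section piins
variable {ι : Type*} [DecidableEq ι] (M : ι → Type*) [∀ i, Group (M i)]

/-- Splitting a pi type over `insert a I` as a product. -/
def piInsertMulEquiv {a : ι} {I : Finset ι} (ha : a ∉ I) :
    ((i : (insert a I : Finset ι)) → M i.1) ≃* M a × ((i : I) → M i.1) where
  toEquiv := (Equiv.piCongrLeft' (fun i : (insert a I : Finset ι) => M i.1)
      (Finset.subtypeInsertEquivOption ha)).symm.symm.trans
    (Equiv.piOptionEquivProd
      (β := fun o => M (((Finset.subtypeInsertEquivOption ha).symm o).1)))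
  map_mul' f g := rfl

end piins

section main
variable {N : Type*} [Group N]

instance iInfBddNormal {ι : Type*} (K : ι → Subgroup N) [∀ i, (K i).Normal] (s : Finset ι) :
    (⨅ i ∈ s, K i).Normal := by
  constructor
  intro x hx g
  simp only [Subgroup.mem_iInf] at hx ⊢
  intro i hi
  exact (‹∀ i, (K i).Normal› i).conj_mem x (hx i hi) g

theorem aux_subdirect {ι : Type*} [DecidableEq ι] (K : ι → Subgroup N)
    [∀ i, (K i).Normal] [∀ i, IsSimpleGroup (N ⧸ K i)] (s : Finset ι) :
    ∃ I : Finset ι, I ⊆ s ∧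
      Nonempty ((N ⧸ ⨅ i ∈ s, K i) ≃* ((i : I) → N ⧸ K i.1)) := by
  classical
  induction s using Finset.induction_on with
  | empty =>
      refine ⟨∅, le_refl _, ⟨?_⟩⟩
      have h : (⨅ i ∈ (∅ : Finset ι), K i) = ⊤ := by simp
      have e1 : (N ⧸ ⨅ i ∈ (∅ : Finset ι), K i) ≃* (N ⧸ (⊤ : Subgroup N)) :=
        QuotientGroup.quotientMulEquivOfEq h
      have : Subsingleton (N ⧸ (⊤ : Subgroup N)) := QuotientGroup.subsingleton_quotient_top
      haveI : Unique (N ⧸ (⊤ : Subgroup N)) := Unique.mk' _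
      haveI : IsEmpty ((∅ : Finset ι) : Type _) := ⟨fun i => Finset.notMem_empty _ i.2⟩
      exact e1.trans MulEquiv.ofUnique
  | @insert a t hat ih =>
      obtain ⟨I, hIt, ⟨e⟩⟩ := ih
      set L : Subgroup N := ⨅ i ∈ t, K i with hL
      have hins : (⨅ i ∈ insert a t, K i) = K a ⊓ L := by
        rw [Finset.iInf_insert]
      by_cases hle : L ≤ K a
      · refine ⟨I, hIt.trans (Finset.subset_insert a t), ⟨?_⟩⟩
        have h2 : (⨅ i ∈ insert a t, K i) = L := by
          rw [hins, inf_eq_right.mpr hle]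
        exact (QuotientGroup.quotientMulEquivOfEq h2).trans e
      · -- L ⊔ K a = ⊤
        have hsup : K a ⊔ L = ⊤ := by
          have hmap : L.map (QuotientGroup.mk' (K a)) = ⊤ := by
            rcases ((iInfBddNormal K t).map (QuotientGroup.mk' (K a))
                (QuotientGroup.mk'_surjective _)).eq_bot_or_eq_top with hb | ht'
            · exfalso
              apply hle
              intro x hx
              have : QuotientGroup.mk' (K a) x ∈ L.map (QuotientGroup.mk' (K a)) :=
                ⟨x, hx, rfl⟩
              rw [hb, Subgroup.mem_bot] at this
              rwa [← QuotientGroup.ker_mk' (K a), MonoidHom.mem_ker]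
            · exact ht'
          rw [eq_top_iff]
          intro n _
          have : QuotientGroup.mk' (K a) n ∈ L.map (QuotientGroup.mk' (K a)) := by
            rw [hmap]; trivial
          obtain ⟨l, hl, hln⟩ := this
          have : l⁻¹ * n ∈ K a := by
            rw [← QuotientGroup.ker_mk' (K a), MonoidHom.mem_ker]
            simp [map_mul, map_inv, hln]
          have : n = l * (l⁻¹ * n) := by group
          rw [this]
          exact Subgroup.mul_mem _ (Subgroup.mem_sup_right hl)
            (Subgroup.mem_sup_left ‹l⁻¹ * n ∈ K a›)
        have haI : a ∉ I := fun h => hat (hIt h)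
        refine ⟨insert a I, Finset.insert_subset_insert a hIt, ⟨?_⟩⟩
        have e2 : (N ⧸ ⨅ i ∈ insert a t, K i) ≃* (N ⧸ K a) × (N ⧸ L) :=
          (QuotientGroup.quotientMulEquivOfEq hins).trans (quotInfEquivProd (K a) L hsup)
        exact (e2.trans ((MulEquiv.refl _).prodCongr e)).trans
          (piInsertMulEquiv (fun i => N ⧸ K i) haI).symm

end main


/-- If `K₀, …, Kₙ` are normal subgroups of `N` with each quotient
`N/Kᵢ` a non-abelian finite simple group, and `K = ⋂ᵢ Kᵢ`, then `N/K` is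
isomorphic to the direct product of the groups `N/Kᵢ` for `i` in some subset
`I` of `{0, …, n}`. -/
theorem quotient_iInf_iso_pi_of_simple {N : Type*} [Group N] (n : ℕ)
    (K : Fin (n + 1) → Subgroup N) [∀ i, (K i).Normal] [(⨅ i, K i).Normal]
    [∀ i, Finite (N ⧸ K i)] [∀ i, IsSimpleGroup (N ⧸ K i)]
    (hna : ∀ i, ¬ ∀ a b : N ⧸ K i, a * b = b * a) :
    ∃ I : Finset (Fin (n + 1)),
      Nonempty ((N ⧸ ⨅ i, K i) ≃* ((i : I) → N ⧸ K i.val)) := by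
  obtain ⟨I, -, ⟨e⟩⟩ := aux_subdirect K Finset.univ
  have h : (⨅ i, K i) = ⨅ i ∈ Finset.univ, K i := by simp
  exact ⟨I, ⟨(QuotientGroup.quotientMulEquivOfEq h).trans e⟩⟩
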